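/- Let δ ∈ (0, 1], let μ ≥ 1, and let 0 ≤ s ≤ t. Then (1/μ²) · [ (1 − e^{−2(t−s)μ²}) + (1 − e^{−(t−s)μ²})² (1 − e^{−2sμ²}) ] ≤ 2^δ · μ^{4δ−2} · (t − s)^δ · (1 + 2^δ s^δ). -/
import Mathlib


open Real

/-- The Hölder-type bound on the second moment of time increments of the Fourier
modes of the stochastic convolution: for `δ ∈ (0,1]`, `μ ≥ 1` and `0 ≤ s ≤ t`,
`(1/μ²)[(1 − e^{−2(t−s)μ²}) + (1 − e^{−(t−s)μ²})²(1 − e^{−2sμ²})]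
  ≤ 2^δ μ^{4δ−2} (t−s)^δ (1 + 2^δ s^δ)`. -/
theorem increment_second_moment_bound (δ μ s t : ℝ)
    (hδ0 : 0 < δ) (hδ1 : δ ≤ 1) (hμ : 1 ≤ μ) (hs : 0 ≤ s) (hst : s ≤ t) :
    (1 / μ ^ 2) *
        ((1 - Real.exp (-2 * (t - s) * μ ^ 2)) +
          (1 - Real.exp (-(t - s) * μ ^ 2)) ^ 2 * (1 - Real.exp (-2 * s * μ ^ 2))) ≤
      (2 : ℝ) ^ δ * μ ^ (4 * δ - 2) * (t - s) ^ δ * (1 + (2 : ℝ) ^ δ * s ^ δ) := by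
  have hμ0 : (0:ℝ) < μ := lt_of_lt_of_le one_pos hμ
  have hh : 0 ≤ t - s := sub_nonneg.mpr hst
  have hδ0' : 0 ≤ δ := hδ0.le
  have key : ∀ x : ℝ, 0 ≤ x → 1 - Real.exp (-x) ≤ x ^ δ := by
    intro x hx
    rcases le_or_gt x 1 with hx1 | hx1
    · rcases eq_or_lt_of_le hx with h0 | h0
      · simp [← h0]
        exact Real.rpow_nonneg le_rfl δ
      · calc 1 - Real.exp (-x) ≤ x := by nlinarith [Real.add_one_le_exp (-x)]
          _ = x ^ (1:ℝ) := (Real.rpow_one x).symm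
          _ ≤ x ^ δ := Real.rpow_le_rpow_of_exponent_ge h0 hx1 hδ1
    · calc 1 - Real.exp (-x) ≤ 1 := by nlinarith [Real.exp_pos (-x)]
        _ ≤ x ^ δ := Real.one_le_rpow hx1.le hδ0'
  have hμ2 : (μ^2 : ℝ) = μ ^ ((2:ℝ)) := by
    rw [← Real.rpow_natCast μ 2]; norm_num
  have hPdef : ((μ:ℝ)^2) ^ δ = μ ^ (2*δ) := by
    rw [hμ2, ← Real.rpow_mul hμ0.le]
  -- abbreviations
  set a : ℝ := (2:ℝ) ^ δ with ha
  set b : ℝ := (t - s) ^ δ with hb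
  set c : ℝ := s ^ δ with hc
  set P : ℝ := μ ^ (2*δ) with hP
  set Q : ℝ := μ ^ (4*δ - 2) with hQ
  have ha1 : 1 ≤ a := Real.one_le_rpow (by norm_num) hδ0'
  have hb0 : 0 ≤ b := Real.rpow_nonneg hh δ
  have hc0 : 0 ≤ c := Real.rpow_nonneg hs δ
  have hP0 : 0 ≤ P := Real.rpow_nonneg hμ0.le _
  have hQ0 : 0 ≤ Q := Real.rpow_nonneg hμ0.le _
  have hM0 : (0:ℝ) < μ ^ 2 := by positivity
  -- P ≤ μ² * Q   and   P * P = μ² * Q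
  have hPP : P * P = μ ^ 2 * Q := by
    rw [hP, hQ, hμ2, ← Real.rpow_add hμ0, ← Real.rpow_add hμ0]
    ring_nf
  have hPle : P ≤ μ ^ 2 * Q := by
    rw [hP, hQ, hμ2, ← Real.rpow_add hμ0]
    exact Real.rpow_le_rpow_of_exponent_le hμ (by linarith)
  -- bounds on the three exponential terms
  have hA : 1 - Real.exp (-2 * (t - s) * μ ^ 2) ≤ a * b * P := by
    have h1 := key (2 * (t - s) * μ ^ 2) (by positivity)
    have heq : (2 * (t - s) * μ ^ 2) ^ δ = a * b * P := by
      rw [Real.mul_rpow (by positivity) (by positivity),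
        Real.mul_rpow (by norm_num) hh, hPdef]
    have h2 : -(2 * (t - s) * μ ^ 2) = -2 * (t - s) * μ ^ 2 := by ring
    rw [h2, heq] at h1
    exact h1
  have hB : 1 - Real.exp (-(t - s) * μ ^ 2) ≤ b * P := by
    have h1 := key ((t - s) * μ ^ 2) (by positivity)
    have heq : ((t - s) * μ ^ 2) ^ δ = b * P := by
      rw [Real.mul_rpow hh (by positivity), hPdef]
    have h2 : -((t - s) * μ ^ 2) = -(t - s) * μ ^ 2 := by ring
    rw [h2, heq] at h1
    exact h1
  have hC : 1 - Real.exp (-2 * s * μ ^ 2) ≤ a * c * P := by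
    have h1 := key (2 * s * μ ^ 2) (by positivity)
    have heq : (2 * s * μ ^ 2) ^ δ = a * c * P := by
      rw [Real.mul_rpow (by positivity) (by positivity),
        Real.mul_rpow (by norm_num) hs, hPdef]
    have h2 : -(2 * s * μ ^ 2) = -2 * s * μ ^ 2 := by ring
    rw [h2, heq] at h1
    exact h1
  have hB0 : 0 ≤ 1 - Real.exp (-(t - s) * μ ^ 2) := by
    have : Real.exp (-(t - s) * μ ^ 2) ≤ 1 := by
      rw [Real.exp_le_one_iff]
      nlinarith
    linarith
  have hB1 : 1 - Real.exp (-(t - s) * μ ^ 2) ≤ 1 := by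
    nlinarith [Real.exp_pos (-(t - s) * μ ^ 2)]
  have hC0 : 0 ≤ 1 - Real.exp (-2 * s * μ ^ 2) := by
    have : Real.exp (-2 * s * μ ^ 2) ≤ 1 := by
      rw [Real.exp_le_one_iff]
      nlinarith
    linarith
  -- combine
  set B : ℝ := 1 - Real.exp (-(t - s) * μ ^ 2)
  have hBsq : B ^ 2 * (1 - Real.exp (-2 * s * μ ^ 2)) ≤ (b * P) * (a * c * P) := by
    have h1 : B ^ 2 ≤ b * P := by nlinarith
    exact mul_le_mul h1 hC hC0 (by positivity)
  have hsum : (1 - Real.exp (-2 * (t - s) * μ ^ 2)) +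
      B ^ 2 * (1 - Real.exp (-2 * s * μ ^ 2)) ≤ a * b * P + (b * P) * (a * c * P) := by
    linarith
  calc (1 / μ ^ 2) *
        ((1 - Real.exp (-2 * (t - s) * μ ^ 2)) +
          B ^ 2 * (1 - Real.exp (-2 * s * μ ^ 2)))
      ≤ (1 / μ ^ 2) * (a * b * P + (b * P) * (a * c * P)) := by
        apply mul_le_mul_of_nonneg_left hsum (by positivity)
    _ ≤ a * Q * b * (1 + a * c) := by
        rw [div_mul_eq_mul_div, one_mul, div_le_iff₀ hM0]
        have habc : 0 ≤ a * b := mul_nonneg (by linarith) hb0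
        have i1 : a * b * P ≤ a * b * (μ ^ 2 * Q) :=
          mul_le_mul_of_nonneg_left hPle habc
        have i2 : 1 * (a * (b * (c * (μ ^ 2 * Q)))) ≤ a * (a * (b * (c * (μ ^ 2 * Q)))) :=
          mul_le_mul_of_nonneg_right ha1 (by positivity)
        rw [one_mul] at i2
        calc a * b * P + b * P * (a * c * P)
            = a * b * P + a * (b * (c * (P * P))) := by ring
          _ = a * b * P + a * (b * (c * (μ ^ 2 * Q))) := by rw [hPP]
          _ ≤ a * b * (μ ^ 2 * Q) + a * (a * (b * (c * (μ ^ 2 * Q)))) := by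
              have := i1; have := i2; linarith
          _ = a * Q * b * (1 + a * c) * μ ^ 2 := by ring
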